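/- arXiv:2501.13522 — 2 statements merged into one kernel-verified Lean document; each statement's English description precedes it below -/
import Mathlib

section
/- Let d ≥ 3 be an odd integer. Let γ_2, γ_3, γ_4 ∈ SO(d) be the diagonal matrices with diagonals ((−1)^{(d−2)}, −1, 1), ((−1)^{(d−2)}, 1, −1) and ((1)^{(d−2)}, −1, −1) respectively, where c^{(k)} means the entry c repeated k times. Then for every γ_1 ∈ SO(d), the 4-tuple (γ_1, γ_2, γ_3, γ_4) fractionally divides S^{d−1}. -/
open MeasureTheory Matrix
open scoped ENNReal

/-- The special orthogonal group `SO(d)`: the subgroup of the real orthogonal group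
consisting of d×d orthogonal matrices of determinant `1`. -/
abbrev SO (d : ℕ) : Subgroup (Matrix.orthogonalGroup (Fin d) ℝ) :=
  MonoidHom.ker (Matrix.detMonoidHom.comp (Matrix.orthogonalGroup (Fin d) ℝ).subtype)

/-- The underlying `d × d` real matrix of an element of `SO(d)`. -/
abbrev SO.mat {d : ℕ} (γ : SO d) : Matrix (Fin d) (Fin d) ℝ :=
  ((γ : Matrix.orthogonalGroup (Fin d) ℝ) : Matrix (Fin d) (Fin d) ℝ)

/-- The spherical measure `μ` on the unit sphere `S^{d-1} ⊆ ℝ^d`: the `(d-1)`-dimensional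
Hausdorff measure restricted to the sphere. -/
noncomputable def sphMeasure (d : ℕ) : Measure (EuclideanSpace ℝ (Fin d)) :=
  (μH[(d : ℝ) - 1]).restrict (Metric.sphere 0 1)

/-- An `r`-tuple `(γ_1, …, γ_r) ∈ SO(d)^r` *fractionally divides* `S^{d-1}` if there is
`f ∈ L²(S^{d-1}, μ)` such that `∑_{s=1}^r γ_s.f = 1` μ-a.e., where `(γ.f)(x) = f(γ⁻¹x)`,
and `f` is not μ-a.e. equal to a constant. -/
def FracDivides {d r : ℕ} (γ : Fin r → SO d) : Prop :=
  ∃ f : EuclideanSpace ℝ (Fin d) → ℝ,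
    MemLp f 2 (sphMeasure d) ∧
    (∀ᵐ x ∂(sphMeasure d), (∑ s, f (WithLp.toLp 2 ((SO.mat (γ s)⁻¹).mulVec (WithLp.ofLp x)))) = 1) ∧
    ¬ ∃ c : ℝ, f =ᵐ[sphMeasure d] fun _ => c


open scoped NNReal RealInnerProductSpace

section helpers
variable {ι : Type*} [Fintype ι]

lemma eucl_dist_le_card (y z : EuclideanSpace ℝ ι) {D : ℝ} (hD : 0 ≤ D)
    (h : ∀ j, |y j - z j| ≤ D) :
    dist y z ≤ Real.sqrt (Fintype.card ι) * D := by
  rw [EuclideanSpace.dist_eq]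
  have h1 : ∑ j, dist (y j) (z j) ^ 2 ≤ (Fintype.card ι : ℝ) * D ^ 2 := by
    calc ∑ j, dist (y j) (z j) ^ 2 ≤ ∑ _j : ι, D ^ 2 := by
          refine Finset.sum_le_sum fun j _ => ?_
          have := h j
          rw [Real.dist_eq]
          nlinarith [abs_nonneg (y j - z j)]
      _ = (Fintype.card ι : ℝ) * D ^ 2 := by
          simp [Finset.sum_const, Finset.card_univ, nsmul_eq_mul]
  calc Real.sqrt (∑ j, dist (y j) (z j) ^ 2) ≤ Real.sqrt ((Fintype.card ι : ℝ) * D ^ 2) :=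
        Real.sqrt_le_sqrt h1
    _ = Real.sqrt (Fintype.card ι) * D := by
        rw [Real.sqrt_mul (Nat.cast_nonneg _), Real.sqrt_sq hD]

/-- the identity from `pi` (sup metric) to Euclidean space is `√card`-Lipschitz -/
lemma lipschitz_ofPi :
    LipschitzWith (Real.toNNReal (Real.sqrt (Fintype.card ι)))
      ((WithLp.equiv 2 (ι → ℝ)).symm) := by
  refine LipschitzWith.of_dist_le_mul fun y z => ?_
  rcases isEmpty_or_nonempty ι with h | h
  · have : y = z := funext fun j => (IsEmpty.false j).elim
    simp [this]
  · have hD : 0 ≤ dist y z := dist_nonneg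
    have := eucl_dist_le_card ((WithLp.equiv 2 (ι → ℝ)).symm y) ((WithLp.equiv 2 (ι → ℝ)).symm z)
      hD (fun j => by
        have := dist_le_pi_dist y z j
        rw [Real.dist_eq] at this
        exact this)
    refine this.trans_eq ?_
    rw [Real.coe_toNNReal _ (Real.sqrt_nonneg _)]

/-- reindexing/projection along an injective map -/
def projE {κ : Type*} (g : κ → ι) (x : EuclideanSpace ℝ ι) : EuclideanSpace ℝ κ :=
  WithLp.toLp 2 (fun k => x (g k))

/-- projection dropping coordinates is 1-Lipschitz between Euclidean spaces -/
lemma lipschitz_proj_subtype {κ : Type*} [Fintype κ] (g : κ → ι) (hg : Function.Injective g) :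
    LipschitzWith 1 (projE (ι := ι) g) := by
  classical
  refine LipschitzWith.of_dist_le_mul fun y z => ?_
  rw [NNReal.coe_one, one_mul, EuclideanSpace.dist_eq (x := y),
    EuclideanSpace.dist_eq (x := projE g y)]
  apply Real.sqrt_le_sqrt
  show ∑ k, dist (projE g y k) (projE g z k) ^ 2 ≤ _
  calc ∑ k, dist (y (g k)) (z (g k)) ^ 2
      = ∑ j ∈ Finset.univ.image g, dist (y j) (z j) ^ 2 := by
        rw [Finset.sum_image (fun a _ b _ h => hg h)]
    _ ≤ ∑ j, dist (y j) (z j) ^ 2 :=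
        Finset.sum_le_sum_of_subset_of_nonneg (Finset.subset_univ _)
          (fun j _ _ => sq_nonneg _)

end helpers

section measurecomp
variable {ι : Type*} [Fintype ι]

lemma vol_le_haus_eucl (s : Set (EuclideanSpace ℝ ι)) :
    volume ((WithLp.equiv 2 (ι → ℝ)) '' s) ≤ μH[(Fintype.card ι : ℝ)] s := by
  have h := (PiLp.lipschitzWith_ofLp 2 (fun _ : ι => ℝ)).hausdorffMeasure_image_le
    (d := (Fintype.card ι : ℝ)) (by positivity) s
  rwa [hausdorffMeasure_pi_real, ENNReal.coe_one, ENNReal.one_rpow, one_mul] at h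

lemma haus_eucl_le_vol (s : Set (ι → ℝ)) :
    μH[(Fintype.card ι : ℝ)] ((WithLp.equiv 2 (ι → ℝ)).symm '' s) ≤
      (Real.toNNReal (Real.sqrt (Fintype.card ι)) : ℝ≥0∞) ^ (Fintype.card ι : ℝ) * volume s := by
  have h := (lipschitz_ofPi (ι := ι)).hausdorffMeasure_image_le
    (d := (Fintype.card ι : ℝ)) (by positivity) s
  rwa [hausdorffMeasure_pi_real] at h

end measurecomp

/-- normalization is Lipschitz away from the origin -/
lemma lipschitz_normalize {E : Type*} [NormedAddCommGroup E] [NormedSpace ℝ E] :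
    LipschitzOnWith 2 (fun x : E => ‖x‖⁻¹ • x) {x : E | 1 ≤ ‖x‖} := by
  refine LipschitzOnWith.of_dist_le_mul fun x hx y hy => ?_
  simp only [Set.mem_setOf_eq] at hx hy
  have hax : (0:ℝ) < ‖x‖ := lt_of_lt_of_le one_pos hx
  have hay : (0:ℝ) < ‖y‖ := lt_of_lt_of_le one_pos hy
  rw [dist_eq_norm, dist_eq_norm]
  have key : ‖x‖⁻¹ • x - ‖y‖⁻¹ • y = ‖x‖⁻¹ • (x - y) + (‖x‖⁻¹ - ‖y‖⁻¹) • y := by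
    rw [smul_sub, sub_smul]; abel
  rw [key]
  have h1 : ‖‖x‖⁻¹ • (x - y)‖ ≤ ‖x - y‖ := by
    rw [norm_smul, Real.norm_eq_abs, abs_of_pos (inv_pos.2 hax)]
    calc ‖x‖⁻¹ * ‖x - y‖ ≤ 1 * ‖x - y‖ := by
          apply mul_le_mul_of_nonneg_right _ (norm_nonneg _)
          exact inv_le_one_of_one_le₀ hx
      _ = ‖x - y‖ := one_mul _
  have h2 : ‖(‖x‖⁻¹ - ‖y‖⁻¹) • y‖ ≤ ‖x - y‖ := by
    rw [norm_smul, Real.norm_eq_abs]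
    have heq : ‖x‖⁻¹ - ‖y‖⁻¹ = (‖y‖ - ‖x‖) / (‖x‖ * ‖y‖) := by
      field_simp
    rw [heq, abs_div, abs_of_pos (mul_pos hax hay), div_mul_eq_mul_div]
    have hnum : |‖y‖ - ‖x‖| ≤ ‖x - y‖ := by
      rw [← norm_sub_rev]
      exact abs_norm_sub_norm_le y x
    calc |‖y‖ - ‖x‖| * ‖y‖ / (‖x‖ * ‖y‖) ≤ ‖x - y‖ * ‖y‖ / (‖x‖ * ‖y‖) := by
          gcongr
      _ = ‖x - y‖ / ‖x‖ := by field_simp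
      _ ≤ ‖x - y‖ := by
          rw [div_le_iff₀ hax]
          nlinarith [norm_nonneg (x - y)]
  have h3 : ‖‖x‖⁻¹ • (x - y) + (‖x‖⁻¹ - ‖y‖⁻¹) • y‖ ≤ ‖x - y‖ + ‖x - y‖ :=
    (norm_add_le _ _).trans (add_le_add h1 h2)
  refine h3.trans ?_
  push_cast
  linarith

-- eigenvector of SO(odd d)
lemma so_eigen {d : ℕ} (hodd : Odd d) {A : Matrix (Fin d) (Fin d) ℝ}
    (horth : A * Aᵀ = 1) (hdet : A.det = 1) :
    ∃ v : Fin d → ℝ, v ≠ 0 ∧ A.mulVec v = v := by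
  have hdet0 : (A - 1).det = 0 := by
    have h1 : A * (1 - Aᵀ) = A - 1 := by
      rw [Matrix.mul_sub, Matrix.mul_one, horth]
    have h2 : (A - 1).det = (1 - A).det := by
      rw [← h1, Matrix.det_mul, hdet, one_mul, ← Matrix.det_transpose (1 - Aᵀ),
        Matrix.transpose_sub, Matrix.transpose_one, Matrix.transpose_transpose]
    have h3 : (1 - A) = -(A - 1) := by rw [neg_sub]
    rw [h3, Matrix.det_neg, Fintype.card_fin, hodd.neg_one_pow] at h2
    linarith
  obtain ⟨v, hv, hAv⟩ := (Matrix.exists_mulVec_eq_zero_iff).2 hdet0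
  refine ⟨v, hv, ?_⟩
  have := hAv
  rwa [Matrix.sub_mulVec, Matrix.one_mulVec, sub_eq_zero] at this

lemma sumsplit_gen {d : ℕ} (i : Fin d) (g : Fin d → ℝ) :
    ∑ j, g j = g i + ∑ j : {j : Fin d // j ≠ i}, g (j : Fin d) := by
  classical
  rw [← Finset.add_sum_erase Finset.univ g (Finset.mem_univ i)]
  congr 1
  exact Finset.sum_subtype (p := fun j => j ≠ i) (Finset.univ.erase i)
    (fun j => by simp [Finset.mem_erase]) g

lemma card_ne_sub {d : ℕ} (hd : 1 ≤ d) (i : Fin d) :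
    (Fintype.card {j : Fin d // j ≠ i} : ℝ) = (d : ℝ) - 1 := by
  classical
  have h1 := Fintype.card_subtype_compl (fun j : Fin d => j = i)
  rw [Fintype.card_subtype_eq, Fintype.card_fin] at h1
  show ((Fintype.card {j : Fin d // ¬ j = i} : ℕ) : ℝ) = (d:ℝ) - 1
  rw [h1]
  push_cast [Nat.cast_sub hd]
  ring

lemma sphere_haus_fin (d : ℕ) (hd : 3 ≤ d) :
    μH[(d:ℝ) - 1] (Metric.sphere (0 : EuclideanSpace ℝ (Fin d)) 1) < ⊤ := by
  classical
  have hd1 : (1:ℕ) ≤ d := by omega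
  have hexp : (0:ℝ) ≤ (d:ℝ) - 1 := by
    have h3 : (3:ℝ) ≤ (d:ℝ) := by exact_mod_cast hd
    linarith
  set R : EuclideanSpace ℝ (Fin d) → EuclideanSpace ℝ (Fin d) := fun x => ‖x‖⁻¹ • x with hR
  -- the embedded faces
  let emb : (i : Fin d) → Bool → EuclideanSpace ℝ {j : Fin d // j ≠ i} →
      EuclideanSpace ℝ (Fin d) := fun i b y => WithLp.toLp 2 (fun j =>
    if h : j = i then (if b then (1:ℝ) else -1) else y ⟨j, h⟩)
  have hembcoord : ∀ i b y (k : {j : Fin d // j ≠ i}), emb i b y (k : Fin d) = y k := by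
    intro i b y k
    show (if h : (k : Fin d) = i then (if b then (1:ℝ) else -1) else y ⟨k, h⟩) = y k
    rw [dif_neg k.property]
  have hembi : ∀ i b y, emb i b y i = (if b then (1:ℝ) else -1) := by
    intro i b y
    show (if h : i = i then (if b then (1:ℝ) else -1) else y ⟨i, h⟩) = _
    rw [dif_pos rfl]
  have hemb_iso : ∀ i b, Isometry (emb i b) := by
    intro i b
    refine Isometry.of_dist_eq fun y z => ?_
    rw [EuclideanSpace.dist_eq, EuclideanSpace.dist_eq]
    congr 1
    rw [sumsplit_gen i (fun j => dist (emb i b y j) (emb i b z j) ^ 2)]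
    simp only [hembi, hembcoord]
    rw [dist_self]
    norm_num
  -- the cube
  let K : (i : Fin d) → Set (EuclideanSpace ℝ {j : Fin d // j ≠ i}) := fun i =>
    (WithLp.equiv 2 ({j : Fin d // j ≠ i} → ℝ)).symm ''
      (Set.pi Set.univ fun _ => Set.Icc (-1:ℝ) 1)
  -- faces lie outside the unit ball
  have hface : ∀ i b, emb i b '' K i ⊆ {x : EuclideanSpace ℝ (Fin d) | 1 ≤ ‖x‖} := by
    intro i b x hx
    obtain ⟨y, _, rfl⟩ := hx
    have h1 : |emb i b y i| = 1 := by
      rw [hembi]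
      split <;> norm_num
    have h2 : (emb i b y i) ^ 2 ≤ ∑ j, (emb i b y j) ^ 2 :=
      Finset.single_le_sum (f := fun j => (emb i b y j) ^ 2)
        (fun j _ => sq_nonneg _) (Finset.mem_univ i)
    have h3 : ‖emb i b y‖ = Real.sqrt (∑ j, (emb i b y j) ^ 2) := by
      rw [EuclideanSpace.norm_eq]
      simp only [Real.norm_eq_abs, sq_abs]
    show 1 ≤ ‖emb i b y‖
    rw [h3]
    calc (1:ℝ) = Real.sqrt ((emb i b y i) ^ 2) := by
          rw [Real.sqrt_sq_eq_abs, h1]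
      _ ≤ Real.sqrt (∑ j, (emb i b y j) ^ 2) := Real.sqrt_le_sqrt h2
  -- covering
  have hcover : Metric.sphere (0 : EuclideanSpace ℝ (Fin d)) 1 ⊆
      ⋃ p : Fin d × Bool, R '' (emb p.1 p.2 '' K p.1) := by
    intro u hu
    have hnu : ‖u‖ = 1 := by simpa using hu
    have : (Finset.univ : Finset (Fin d)).Nonempty := by
      refine ⟨⟨0, by omega⟩, Finset.mem_univ _⟩
    obtain ⟨i, _, hmax⟩ := Finset.exists_max_image Finset.univ (fun j => |u j|) this
    have hm : 0 < |u i| := by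
      by_contra hc
      push_neg at hc
      have hall : ∀ j, u j = 0 := fun j =>
        abs_eq_zero.1 (le_antisymm ((hmax j (Finset.mem_univ j)).trans hc) (abs_nonneg _))
      have hu0 : u = 0 := PiLp.ext fun j => by simp [hall j]
      rw [hu0] at hnu
      simp at hnu
    set m : ℝ := |u i| with hmdef
    set b : Bool := decide (0 < u i) with hbdef
    set w : {j : Fin d // j ≠ i} → ℝ := fun k => m⁻¹ * u (k : Fin d) with hwdef
    have hwK : (WithLp.equiv 2 ({j : Fin d // j ≠ i} → ℝ)).symm w ∈ K i := by
      refine ⟨w, ?_, rfl⟩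
      intro k _
      constructor
      · rw [hwdef]
        simp only
        rw [neg_le, ← neg_mul]
        calc -(m⁻¹) * u (k:Fin d) ≤ |(-(m⁻¹)) * u (k:Fin d)| := le_abs_self _
          _ = m⁻¹ * |u (k:Fin d)| := by
              rw [abs_mul, abs_neg, abs_of_pos (inv_pos.2 hm)]
          _ ≤ m⁻¹ * m := mul_le_mul_of_nonneg_left (hmax _ (Finset.mem_univ _))
              (inv_pos.2 hm).le
          _ = 1 := inv_mul_cancel₀ hm.ne'
      · rw [hwdef]
        simp only
        calc m⁻¹ * u (k:Fin d) ≤ |m⁻¹ * u (k:Fin d)| := le_abs_self _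
          _ = m⁻¹ * |u (k:Fin d)| := by rw [abs_mul, abs_of_pos (inv_pos.2 hm)]
          _ ≤ m⁻¹ * m := mul_le_mul_of_nonneg_left (hmax _ (Finset.mem_univ _))
              (inv_pos.2 hm).le
          _ = 1 := inv_mul_cancel₀ hm.ne'
    set x : EuclideanSpace ℝ (Fin d) := m⁻¹ • u with hxdef
    have hxemb : emb i b ((WithLp.equiv 2 ({j : Fin d // j ≠ i} → ℝ)).symm w) = x := by
      refine PiLp.ext fun j => ?_
      by_cases h : j = i
      · subst h
        rw [hembi]
        show _ = (m⁻¹ • u) j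
        rw [PiLp.smul_apply, smul_eq_mul]
        by_cases hpos : 0 < u j
        · rw [hbdef, decide_eq_true hpos]
          simp only [if_true]
          rw [hmdef, abs_of_pos hpos]
          field_simp
        · have hne : u j ≠ 0 := by
            intro h0
            rw [hmdef, h0] at hm
            simp at hm
          have hneg : u j < 0 := lt_of_le_of_ne (not_lt.1 hpos) hne
          rw [hbdef, decide_eq_false hpos]
          simp only [Bool.false_eq_true, if_false]
          rw [hmdef, abs_of_neg hneg]
          field_simp
      · rw [hembcoord i b _ ⟨j, h⟩]
        show w ⟨j, h⟩ = (m⁻¹ • u) j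
        rw [PiLp.smul_apply, smul_eq_mul]
    have hRx : R x = u := by
      rw [hR]
      show ‖x‖⁻¹ • x = u
      have hnx : ‖x‖ = m⁻¹ := by
        rw [hxdef, norm_smul, hnu, Real.norm_eq_abs, abs_of_pos (inv_pos.2 hm), mul_one]
      rw [hnx, inv_inv, hxdef, smul_smul, mul_inv_cancel₀ hm.ne', one_smul]
    refine Set.mem_iUnion.2 ⟨⟨i, b⟩, ?_⟩
    exact ⟨x, ⟨_, hwK, hxemb⟩, hRx⟩
  -- measure bound
  refine lt_of_le_of_lt (measure_mono hcover) ?_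
  refine lt_of_le_of_lt (measure_iUnion_le _) ?_
  rw [tsum_fintype]
  refine ENNReal.sum_lt_top.2 fun p _ => ?_
  obtain ⟨i, b⟩ := p
  have hsub : emb i b '' K i ⊆ {x : EuclideanSpace ℝ (Fin d) | 1 ≤ ‖x‖} := hface i b
  have hlip : LipschitzOnWith 2 R (emb i b '' K i) :=
    (lipschitz_normalize (E := EuclideanSpace ℝ (Fin d))).mono hsub
  have h1 : μH[(d:ℝ)-1] (R '' (emb i b '' K i)) ≤
      (2 : ℝ≥0∞) ^ ((d:ℝ)-1) * μH[(d:ℝ)-1] (emb i b '' K i) := by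
    have := hlip.hausdorffMeasure_image_le hexp
    simpa using this
  have h2 : μH[(d:ℝ)-1] (emb i b '' K i) = μH[(d:ℝ)-1] (K i) :=
    (hemb_iso i b).hausdorffMeasure_image (Or.inl hexp) _
  have h3 : μH[(d:ℝ)-1] (K i) < ⊤ := by
    have := haus_eucl_le_vol (ι := {j : Fin d // j ≠ i})
      (Set.pi Set.univ fun _ => Set.Icc (-1:ℝ) 1)
    rw [card_ne_sub hd1 i] at this
    refine lt_of_le_of_lt this ?_
    refine ENNReal.mul_lt_top ?_ ?_
    · exact ENNReal.rpow_lt_top_of_nonneg hexp ENNReal.coe_ne_top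
    · rw [MeasureTheory.volume_pi_pi]
      simp only [Real.volume_Icc]
      exact ENNReal.prod_lt_top fun _ _ => ENNReal.ofReal_lt_top
  refine lt_of_le_of_lt h1 ?_
  rw [h2]
  exact ENNReal.mul_lt_top (ENNReal.rpow_lt_top_of_nonneg hexp (by norm_num)) h3

lemma sphere_cap_pos (d : ℕ) (hd : 3 ≤ d) (x₀ : EuclideanSpace ℝ (Fin d))
    (hx₀ : ‖x₀‖ = 1) {ε : ℝ} (hε : 0 < ε) :
    0 < μH[(d:ℝ) - 1] (Metric.sphere (0 : EuclideanSpace ℝ (Fin d)) 1 ∩ Metric.ball x₀ ε) := by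
  classical
  -- find a nonzero coordinate
  have hex : ∃ i, x₀ i ≠ 0 := by
    by_contra h
    push_neg at h
    have : x₀ = 0 := PiLp.ext fun j => by simp [h j]
    rw [this] at hx₀
    simp at hx₀
  obtain ⟨i, hi⟩ := hex
  set ι := {j : Fin d // j ≠ i} with hιdef
  have hcard : Fintype.card ι = d - 1 := by
    have h1 := Fintype.card_subtype_compl (fun j : Fin d => j = i)
    rw [Fintype.card_subtype_eq, Fintype.card_fin] at h1
    exact h1
  have hcardR : (Fintype.card ι : ℝ) = (d : ℝ) - 1 := by
    rw [hcard]
    have : (1:ℕ) ≤ d := by omega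
    push_cast [Nat.cast_sub this]
    ring
  set P : EuclideanSpace ℝ (Fin d) → EuclideanSpace ℝ ι := projE Subtype.val with hPdef
  set s₀ : ℝ := if 0 < x₀ i then 1 else -1 with hs₀def
  have hs₀sq : s₀ ^ 2 = 1 := by
    rw [hs₀def]; split <;> norm_num
  have hs₀abs : s₀ * |x₀ i| = x₀ i := by
    rw [hs₀def]; split
    · rw [abs_of_pos ‹_›]; ring
    · rw [abs_of_neg (lt_of_le_of_ne (not_lt.1 ‹_›) hi)]; ring
  -- sum splitting
  have sumsplit : ∀ g : Fin d → ℝ, ∑ j, g j = g i + ∑ j : ι, g (j : Fin d) := by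
    intro g
    rw [← Finset.add_sum_erase Finset.univ g (Finset.mem_univ i)]
    congr 1
    exact Finset.sum_subtype (p := fun j => j ≠ i) (Finset.univ.erase i)
      (fun j => by simp [Finset.mem_erase]) g
  have hsum₀ : ∑ j, (x₀ j) ^ 2 = 1 := by
    have h0 := EuclideanSpace.norm_eq x₀
    simp only [Real.norm_eq_abs, sq_abs] at h0
    rw [hx₀] at h0
    exact Real.sqrt_eq_one.1 h0.symm
  have hsumι : ∑ j : ι, (x₀ (j:Fin d)) ^ 2 = 1 - (x₀ i) ^ 2 := by
    have := sumsplit (fun j => (x₀ j) ^ 2)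
    rw [hsum₀] at this
    linarith
  -- the graph map
  set r : EuclideanSpace ℝ ι → ℝ := fun y => ∑ k, (y k) ^ 2 with hrdef
  set G : EuclideanSpace ℝ ι → EuclideanSpace ℝ (Fin d) :=
    fun y => WithLp.toLp 2 (fun j => if h : j = i then s₀ * Real.sqrt (1 - r y) else y ⟨j, h⟩) with hGdef
  have hGcoord : ∀ y (k : ι), G y (k : Fin d) = y k := by
    intro y k
    rw [hGdef]
    simp only
    rw [dif_neg k.property]
  have hGsphere : ∀ y, r y ≤ 1 → ‖G y‖ = 1 := by
    intro y hy
    have hnn : 0 ≤ 1 - r y := by linarith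
    rw [EuclideanSpace.norm_eq]
    simp only [Real.norm_eq_abs, sq_abs]
    have hsq : ∑ j, (G y j) ^ 2 = 1 := by
      rw [sumsplit (fun j => (G y j) ^ 2)]
      have h1 : G y i = s₀ * Real.sqrt (1 - r y) := by rw [hGdef]; simp
      have h2 : ∑ j : ι, (G y (j : Fin d)) ^ 2 = r y := by
        rw [hrdef]
        exact Finset.sum_congr rfl fun k _ => by rw [hGcoord y k]
      rw [h1, h2, mul_pow, hs₀sq, Real.sq_sqrt hnn]
      ring
    rw [hsq, Real.sqrt_one]
  have hGP : G (P x₀) = x₀ := by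
    refine PiLp.ext fun j => ?_
    rw [hGdef]
    simp only
    split
    · rename_i h
      subst h
      have hr : r (P x₀) = 1 - (x₀ j) ^ 2 := by
        rw [hrdef]
        exact hsumι
      rw [hr]
      have : (1 : ℝ) - (1 - x₀ j ^ 2) = x₀ j ^ 2 := by ring
      rw [this, Real.sqrt_sq_eq_abs, hs₀abs]
    · rfl
  -- continuity
  have hcoordc : ∀ k : ι, Continuous fun y : EuclideanSpace ℝ ι => y k :=
    fun k => (EuclideanSpace.proj (𝕜 := ℝ) k).continuous
  have hrc : Continuous r := by
    have : Continuous fun y : EuclideanSpace ℝ ι => ∑ k, (y k) ^ 2 :=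
      continuous_finset_sum _ fun k _ => (hcoordc k).pow 2
    exact this
  have hGc : Continuous G := by
    have h0 : Continuous fun y : EuclideanSpace ℝ ι => (WithLp.equiv 2 (Fin d → ℝ)) (G y) := by
      refine continuous_pi fun j => ?_
      rcases eq_or_ne j i with h | h
      · refine Continuous.congr
          (f := fun y : EuclideanSpace ℝ ι => s₀ * Real.sqrt (1 - r y)) ?_ ?_
        · exact continuous_const.mul (Real.continuous_sqrt.comp (continuous_const.sub hrc))
        · intro y
          show s₀ * Real.sqrt (1 - r y) = G y j
          rw [hGdef]
          simp only
          rw [dif_pos h]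
      · refine Continuous.congr (f := fun y : EuclideanSpace ℝ ι => y ⟨j, h⟩) (hcoordc _) ?_
        intro y
        show y ⟨j, h⟩ = G y j
        rw [hGdef]
        simp only
        rw [dif_neg h]
    have hGeq : G = (WithLp.equiv 2 (Fin d → ℝ)).symm ∘
        (fun y => (WithLp.equiv 2 (Fin d → ℝ)) (G y)) := rfl
    rw [hGeq]
    exact (PiLp.continuous_toLp 2 (fun _ : Fin d => ℝ)).comp h0
  -- open neighbourhood
  have hWopen : IsOpen (G ⁻¹' Metric.ball x₀ ε ∩ r ⁻¹' Set.Iio 1) :=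
    (Metric.isOpen_ball.preimage hGc).inter (isOpen_Iio.preimage hrc)
  have hWmem : P x₀ ∈ G ⁻¹' Metric.ball x₀ ε ∩ r ⁻¹' Set.Iio 1 := by
    constructor
    · show G (P x₀) ∈ Metric.ball x₀ ε
      rw [hGP]
      exact Metric.mem_ball_self hε
    · show r (P x₀) < 1
      have : r (P x₀) = 1 - (x₀ i) ^ 2 := hsumι
      rw [this]
      nlinarith [sq_nonneg (x₀ i), hi, sq_abs (x₀ i), abs_pos.2 hi]
  obtain ⟨δ, hδpos, hδball⟩ := Metric.isOpen_iff.1 hWopen _ hWmem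
  -- the pi-level ball
  set c₀ : ι → ℝ := fun k => x₀ (k : Fin d) with hc₀def
  set κ : ℝ := Real.sqrt (Fintype.card ι) with hκdef
  have hκnn : 0 ≤ κ := Real.sqrt_nonneg _
  set δ' : ℝ := δ / (κ + 1) with hδ'def
  have hδ'pos : 0 < δ' := div_pos hδpos (by linarith)
  have hball_sub : Metric.ball c₀ δ' ⊆
      (fun x : EuclideanSpace ℝ (Fin d) => WithLp.equiv 2 (ι → ℝ) (P x)) ''
        (Metric.sphere (0 : EuclideanSpace ℝ (Fin d)) 1 ∩ Metric.ball x₀ ε) := by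
    intro w hw
    set y : EuclideanSpace ℝ ι := (WithLp.equiv 2 (ι → ℝ)).symm w with hydef
    have hdisty : dist y (P x₀) < δ := by
      have h1 : ∀ k : ι, |y k - P x₀ k| ≤ dist w c₀ := by
        intro k
        have := dist_le_pi_dist w c₀ k
        rw [Real.dist_eq] at this
        exact this
      have h2 := eucl_dist_le_card y (P x₀) dist_nonneg h1
      have h3 : dist w c₀ < δ' := hw
      calc dist y (P x₀) ≤ κ * dist w c₀ := h2
        _ ≤ κ * δ' := mul_le_mul_of_nonneg_left h3.le hκnn
        _ < δ := by
            rw [hδ'def, ← mul_div_assoc, div_lt_iff₀ (by linarith : (0:ℝ) < κ + 1)]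
            nlinarith
    have hyW : y ∈ G ⁻¹' Metric.ball x₀ ε ∩ r ⁻¹' Set.Iio 1 :=
      hδball (Metric.mem_ball.2 hdisty)
    refine ⟨G y, ⟨?_, hyW.1⟩, ?_⟩
    · rw [Metric.mem_sphere, dist_zero_right]
      exact hGsphere y (le_of_lt hyW.2)
    · funext k
      show G y (k : Fin d) = w k
      rw [hGcoord y k]
      rfl
  -- measure chain
  have hvol : 0 < volume (Metric.ball c₀ δ') := Metric.measure_ball_pos volume c₀ hδ'pos
  set S := Metric.sphere (0 : EuclideanSpace ℝ (Fin d)) 1 ∩ Metric.ball x₀ ε with hSdef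
  have himg : (fun x : EuclideanSpace ℝ (Fin d) => WithLp.equiv 2 (ι → ℝ) (P x)) '' S
      = (WithLp.equiv 2 (ι → ℝ)) '' (P '' S) := by
    rw [Set.image_image]
  have step1 : volume (Metric.ball c₀ δ') ≤ μH[(Fintype.card ι : ℝ)] (P '' S) := by
    refine le_trans (measure_mono ?_) (vol_le_haus_eucl (P '' S))
    rw [← himg]
    exact hball_sub
  have step2 : μH[(d:ℝ)-1] (P '' S) ≤ μH[(d:ℝ)-1] S := by
    have h := (lipschitz_proj_subtype (ι := Fin d) (Subtype.val : ι → Fin d)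
      Subtype.coe_injective).hausdorffMeasure_image_le (d := (d:ℝ)-1)
      (by
        have h3 : (3:ℝ) ≤ (d:ℝ) := by exact_mod_cast hd
        linarith) S
    simpa using h
  rw [hcardR] at step1
  exact lt_of_lt_of_le hvol (le_trans step1 step2)

-- mat of inverse is transpose
lemma SO.mat_inv {d : ℕ} (γ : SO d) : SO.mat γ⁻¹ = (SO.mat γ)ᵀ := by
  have h1 : SO.mat γ⁻¹ = star (SO.mat γ) := rfl
  rw [h1, Matrix.star_eq_conjTranspose, Matrix.conjTranspose_eq_transpose_of_trivial]

/-- Let `d ≥ 3` be odd and let `γ₂, γ₃, γ₄ ∈ SO(d)` be the diagonal matrices with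
diagonals `((-1)^{(d-2)}, -1, 1)`, `((-1)^{(d-2)}, 1, -1)` and `((1)^{(d-2)}, -1, -1)`.
Then for every `γ₁ ∈ SO(d)` the tuple `(γ₁, γ₂, γ₃, γ₄)` fractionally divides
`S^{d-1}`. -/
theorem fracDivides_of_diagonal_triple (d : ℕ) (hd : 3 ≤ d) (hodd : Odd d)
    (γ₂ γ₃ γ₄ : SO d)
    (h2 : SO.mat γ₂ = Matrix.diagonal fun i : Fin d =>
      if (i : ℕ) = d - 1 then 1 else -1)
    (h3 : SO.mat γ₃ = Matrix.diagonal fun i : Fin d =>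
      if (i : ℕ) = d - 2 then 1 else -1)
    (h4 : SO.mat γ₄ = Matrix.diagonal fun i : Fin d =>
      if d - 2 ≤ (i : ℕ) then -1 else 1)
    (γ₁ : SO d) :
    FracDivides ![γ₁, γ₂, γ₃, γ₄] := by
  classical
  -- orthogonality and determinant of γ₁
  have horth : SO.mat γ₁ * (SO.mat γ₁)ᵀ = 1 := by
    have := (γ₁ : Matrix.orthogonalGroup (Fin d) ℝ).prop
    rw [Matrix.mem_orthogonalGroup_iff] at this
    exact this
  have hdet : (SO.mat γ₁).det = 1 := by
    have := γ₁.prop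
    rw [MonoidHom.mem_ker] at this
    simpa using this
  obtain ⟨v, hv0, hEig⟩ := so_eigen hodd horth hdet
  -- the sum of the three diagonal matrices is -1
  have hsum234 : SO.mat γ₂ + SO.mat γ₃ + SO.mat γ₄ = -1 := by
    rw [h2, h3, h4, Matrix.diagonal_add, Matrix.diagonal_add]
    have hone : (-1 : Matrix (Fin d) (Fin d) ℝ) = Matrix.diagonal (fun _ => -1) := by
      rw [← Matrix.diagonal_one, ← Matrix.diagonal_neg]
    rw [hone]
    refine congrArg Matrix.diagonal ?_
    funext i
    show (if (i:ℕ) = d - 1 then (1:ℝ) else -1) + (if (i:ℕ) = d - 2 then (1:ℝ) else -1)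
      + (if d - 2 ≤ (i:ℕ) then (-1:ℝ) else 1) = -1
    have hlt : (i : ℕ) < d := i.isLt
    by_cases hA : (i : ℕ) = d - 1
    · have hB : ¬ (i : ℕ) = d - 2 := by omega
      have hC : d - 2 ≤ (i : ℕ) := by omega
      rw [if_pos hA, if_neg hB, if_pos hC]
      norm_num
    · by_cases hB : (i : ℕ) = d - 2
      · have hC : d - 2 ≤ (i : ℕ) := by omega
        rw [if_neg hA, if_pos hB, if_pos hC]
        norm_num
      · have hC : ¬ d - 2 ≤ (i : ℕ) := by omega
        rw [if_neg hA, if_neg hB, if_neg hC]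
        norm_num
  -- v as Euclidean vector
  set v' : EuclideanSpace ℝ (Fin d) := (WithLp.equiv 2 (Fin d → ℝ)).symm v with hv'def
  have hv'0 : v' ≠ 0 := by
    intro h
    apply hv0
    have := congrArg WithLp.ofLp h
    simpa [hv'def] using this
  have hip : ∀ x : EuclideanSpace ℝ (Fin d), ⟪v', x⟫ = v ⬝ᵥ (x : Fin d → ℝ) := by
    intro x
    rw [PiLp.inner_apply]
    simp only [RCLike.inner_apply, starRingEnd_apply, star_trivial]
    exact Finset.sum_congr rfl fun i _ => mul_comm _ _
  set f : EuclideanSpace ℝ (Fin d) → ℝ := fun x => 1/4 + v ⬝ᵥ (x : Fin d → ℝ) with hfdef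
  -- finiteness of the measure
  have hfin : IsFiniteMeasure (sphMeasure d) := by
    constructor
    rw [sphMeasure, Measure.restrict_apply_univ]
    exact sphere_haus_fin d hd
  -- continuity of f
  have hcont : Continuous f := by
    rw [hfdef]
    refine continuous_const.add ?_
    refine continuous_finset_sum _ fun i _ => ?_
    exact continuous_const.mul (EuclideanSpace.proj (𝕜 := ℝ) i).continuous
  refine ⟨f, ?_, ?_, ?_⟩
  · -- Memℒp
    have hmeas : AEStronglyMeasurable f (sphMeasure d) := hcont.aestronglyMeasurable
    have hbd : ∀ᵐ x ∂(sphMeasure d), ‖f x‖ ≤ 1/4 + ‖v'‖ := by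
      rw [sphMeasure]
      rw [ae_restrict_iff' Metric.isClosed_sphere.measurableSet]
      refine Filter.Eventually.of_forall fun x hx => ?_
      have hx1 : ‖x‖ = 1 := by simpa using hx
      have h1 : |v ⬝ᵥ (x : Fin d → ℝ)| ≤ ‖v'‖ := by
        rw [← hip x]
        calc |⟪v', x⟫| ≤ ‖v'‖ * ‖x‖ := abs_real_inner_le_norm v' x
          _ = ‖v'‖ := by rw [hx1, mul_one]
      rw [hfdef]
      simp only [Real.norm_eq_abs]
      calc |1/4 + v ⬝ᵥ (x : Fin d → ℝ)| ≤ |(1:ℝ)/4| + |v ⬝ᵥ (x : Fin d → ℝ)| := abs_add_le _ _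
        _ ≤ 1/4 + ‖v'‖ := by
            rw [abs_of_pos (by norm_num : (0:ℝ) < 1/4)]
            linarith
    exact (memLp_top_of_bound hmeas _ hbd).mono_exponent le_top
  · -- the tiling identity, in fact everywhere
    refine Filter.Eventually.of_forall fun x => ?_
    have key : ∀ γ : SO d, f (WithLp.toLp 2 ((SO.mat γ⁻¹).mulVec (WithLp.ofLp x))) = 1/4 + (SO.mat γ).mulVec v ⬝ᵥ x := by
      intro γ
      rw [hfdef]
      simp only
      rw [SO.mat_inv, Matrix.dotProduct_mulVec, Matrix.vecMul_transpose]
    rw [Fin.sum_univ_four]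
    have e0 : (![γ₁, γ₂, γ₃, γ₄] : Fin 4 → SO d) 0 = γ₁ := rfl
    have e1 : (![γ₁, γ₂, γ₃, γ₄] : Fin 4 → SO d) 1 = γ₂ := rfl
    have e2 : (![γ₁, γ₂, γ₃, γ₄] : Fin 4 → SO d) 2 = γ₃ := rfl
    have e3 : (![γ₁, γ₂, γ₃, γ₄] : Fin 4 → SO d) 3 = γ₄ := rfl
    rw [e0, e1, e2, e3, key γ₁, key γ₂, key γ₃, key γ₄, hEig]
    have h234 : (SO.mat γ₂).mulVec v + (SO.mat γ₃).mulVec v + (SO.mat γ₄).mulVec v = -v := by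
      rw [← Matrix.add_mulVec, ← Matrix.add_mulVec, hsum234, Matrix.neg_mulVec,
        Matrix.one_mulVec]
    have hexpand : v ⬝ᵥ x + ((SO.mat γ₂).mulVec v ⬝ᵥ x + (SO.mat γ₃).mulVec v ⬝ᵥ x
        + (SO.mat γ₄).mulVec v ⬝ᵥ x) = (v + ((SO.mat γ₂).mulVec v + (SO.mat γ₃).mulVec v
        + (SO.mat γ₄).mulVec v)) ⬝ᵥ x := by
      rw [add_dotProduct, add_dotProduct, add_dotProduct]
    have hzero : v + ((SO.mat γ₂).mulVec v + (SO.mat γ₃).mulVec v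
        + (SO.mat γ₄).mulVec v) = 0 := by
      rw [h234]
      simp
    have : v ⬝ᵥ x + ((SO.mat γ₂).mulVec v ⬝ᵥ x + (SO.mat γ₃).mulVec v ⬝ᵥ x
        + (SO.mat γ₄).mulVec v ⬝ᵥ x) = 0 := by
      rw [hexpand, hzero, zero_dotProduct]
    linarith [this]
  · -- not a.e. constant
    rintro ⟨c, hc⟩
    set t : ℝ := c - 1/4 with htdef
    have hnv : 0 < ‖v'‖ := norm_pos_iff.2 hv'0
    set u : EuclideanSpace ℝ (Fin d) := ‖v'‖⁻¹ • v' with hudef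
    have hu1 : ‖u‖ = 1 := by
      rw [hudef, norm_smul, Real.norm_eq_abs, abs_of_pos (inv_pos.2 hnv), inv_mul_cancel₀ hnv.ne']
    have hipu : ⟪v', u⟫ = ‖v'‖ := by
      rw [hudef, real_inner_smul_right, real_inner_self_eq_norm_sq]
      field_simp
    have hipnu : ⟪v', -u⟫ = -‖v'‖ := by rw [inner_neg_right, hipu]
    -- choose the cap center
    obtain ⟨x₀, hx₀1, hx₀t⟩ : ∃ x₀ : EuclideanSpace ℝ (Fin d), ‖x₀‖ = 1 ∧ ⟪v', x₀⟫ ≠ t := by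
      by_cases h : ⟪v', u⟫ = t
      · refine ⟨-u, by rwa [norm_neg], ?_⟩
        rw [hipnu, ← h, hipu]
        intro hcontra
        linarith
      · exact ⟨u, hu1, h⟩
    set ε : ℝ := |⟪v', x₀⟫ - t| / (2 * ‖v'‖) with hεdef
    have hε : 0 < ε := by
      apply div_pos
      · exact abs_pos.2 (sub_ne_zero.2 hx₀t)
      · linarith
    have hcap : ∀ x ∈ Metric.ball x₀ ε, ⟪v', x⟫ ≠ t := by
      intro x hx hcontra
      have hdist : ‖x - x₀‖ < ε := by
        rw [← dist_eq_norm]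
        exact hx
      have h1 : |⟪v', x⟫ - ⟪v', x₀⟫| ≤ ‖v'‖ * ‖x - x₀‖ := by
        rw [← inner_sub_right]
        exact abs_real_inner_le_norm v' (x - x₀)
      have h2 : ‖v'‖ * ‖x - x₀‖ < ‖v'‖ * ε := by
        exact mul_lt_mul_of_pos_left hdist hnv
      have h3 : ‖v'‖ * ε = |⟪v', x₀⟫ - t| / 2 := by
        rw [hεdef]
        field_simp
      rw [hcontra] at h1
      have h4 : |t - ⟪v', x₀⟫| = |⟪v', x₀⟫ - t| := abs_sub_comm _ _
      rw [h4] at h1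
      have := lt_of_le_of_lt h1 (lt_of_lt_of_le h2 (le_of_eq h3))
      have habs : 0 ≤ |⟪v', x₀⟫ - t| := abs_nonneg _
      linarith
    -- the cap is contained in {f ≠ c}
    have hsub : Metric.sphere (0 : EuclideanSpace ℝ (Fin d)) 1 ∩ Metric.ball x₀ ε ⊆
        {x | f x ≠ c} := by
      rintro x ⟨_, hxball⟩
      show f x ≠ c
      rw [hfdef]
      simp only
      rw [← hip x]
      intro hcontra
      exact hcap x hxball (by rw [htdef]; linarith)
    have h0 : sphMeasure d {x | f x ≠ c} = 0 := by
      have := hc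
      rw [Filter.EventuallyEq, ae_iff] at this
      exact this
    have hle : sphMeasure d (Metric.sphere (0 : EuclideanSpace ℝ (Fin d)) 1 ∩
        Metric.ball x₀ ε) ≤ 0 := h0 ▸ measure_mono hsub
    have heq : sphMeasure d (Metric.sphere (0 : EuclideanSpace ℝ (Fin d)) 1 ∩
        Metric.ball x₀ ε) = μH[(d:ℝ)-1] (Metric.sphere (0 : EuclideanSpace ℝ (Fin d)) 1 ∩
        Metric.ball x₀ ε) := by
      rw [sphMeasure, Measure.restrict_apply
        (Metric.isClosed_sphere.measurableSet.inter Metric.isOpen_ball.measurableSet)]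
      congr 1
      exact Set.inter_eq_self_of_subset_left Set.inter_subset_left
    rw [heq] at hle
    exact absurd (sphere_cap_pos d hd x₀ hx₀1 hε) (not_lt.2 hle)
end

section
/- Let d, r ≥ 2 be integers and let (γ_1,…,γ_r) ∈ SO(d)^r be an r-tuple in which some single element γ ∈ SO(d) occurs strictly more than r/2 times among the entries. Then (γ_1,…,γ_r) does not fractionally divide S^{d−1}. -/
open MeasureTheory Matrix
open scoped ENNReal

open scoped RealInnerProductSpace

section aux

variable {d : ℕ}

/-- Multiplication by a matrix, as a self-map of Euclidean space. -/
noncomputable def rotMap (M : Matrix (Fin d) (Fin d) ℝ) :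
    EuclideanSpace ℝ (Fin d) → EuclideanSpace ℝ (Fin d) :=
  fun x => (WithLp.equiv 2 (Fin d → ℝ)).symm (M.mulVec ((WithLp.equiv 2 (Fin d → ℝ)) x))

lemma rotMap_norm_eq (M : Matrix (Fin d) (Fin d) ℝ)
    (hM : M ∈ Matrix.orthogonalGroup (Fin d) ℝ) (x : EuclideanSpace ℝ (Fin d)) :
    ‖rotMap M x‖ = ‖x‖ := by
  have h1 : Mᵀ * M = 1 := by
    have := (Matrix.mem_orthogonalGroup_iff' (Fin d) ℝ).mp hM
    simpa [Matrix.star_eq_conjTranspose] using this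
  set x' : Fin d → ℝ := (WithLp.equiv 2 (Fin d → ℝ)) x with hx'
  have key : ⟪rotMap M x, rotMap M x⟫ = ⟪x, x⟫ := by
    have e1 : ⟪rotMap M x, rotMap M x⟫ =
        dotProduct (star (M.mulVec x')) (M.mulVec x') :=
      (EuclideanSpace.inner_toLp_toLp _ _).trans (dotProduct_comm _ _)
    have e2 : ⟪x, x⟫ = dotProduct (star x') x' := by
      have : x = (WithLp.equiv 2 (Fin d → ℝ)).symm x' := rfl
      rw [this]; exact (EuclideanSpace.inner_toLp_toLp _ _).trans (dotProduct_comm _ _)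
    have hstar1 : star (M.mulVec x') = M.mulVec x' := by
      funext i; simp
    have hstar2 : star x' = x' := by funext i; simp
    rw [e1, e2, hstar1, hstar2, dotProduct_mulVec, ← Matrix.mulVec_transpose,
      Matrix.mulVec_mulVec, h1, Matrix.one_mulVec]
  have := congrArg Real.sqrt key
  rwa [real_inner_self_eq_norm_sq, real_inner_self_eq_norm_sq,
    Real.sqrt_sq (norm_nonneg _), Real.sqrt_sq (norm_nonneg _)] at this

/-- The isometry equivalence of Euclidean space given by an orthogonal matrix. -/
noncomputable def rotIso (u : Matrix.orthogonalGroup (Fin d) ℝ) :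
    EuclideanSpace ℝ (Fin d) ≃ᵢ EuclideanSpace ℝ (Fin d) where
  toFun := rotMap (u : Matrix (Fin d) (Fin d) ℝ)
  invFun := rotMap ((u⁻¹ : Matrix.orthogonalGroup (Fin d) ℝ) : Matrix (Fin d) (Fin d) ℝ)
  left_inv x := by
    have hinv : ((u⁻¹ : Matrix.orthogonalGroup (Fin d) ℝ) : Matrix (Fin d) (Fin d) ℝ) *
        (u : Matrix (Fin d) (Fin d) ℝ) = 1 := by
      rw [← Unitary.star_eq_inv]; exact Unitary.coe_star_mul_self u
    change WithLp.toLp 2 (((u⁻¹ : Matrix.orthogonalGroup (Fin d) ℝ) : Matrix (Fin d) (Fin d) ℝ).mulVec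
      ((u : Matrix (Fin d) (Fin d) ℝ).mulVec x.ofLp)) = x
    rw [Matrix.mulVec_mulVec, hinv, Matrix.one_mulVec]
  right_inv x := by
    have hinv : (u : Matrix (Fin d) (Fin d) ℝ) *
        ((u⁻¹ : Matrix.orthogonalGroup (Fin d) ℝ) : Matrix (Fin d) (Fin d) ℝ) = 1 := by
      rw [← Unitary.star_eq_inv]; exact Unitary.coe_mul_star_self u
    change WithLp.toLp 2 ((u : Matrix (Fin d) (Fin d) ℝ).mulVec
      (((u⁻¹ : Matrix.orthogonalGroup (Fin d) ℝ) : Matrix (Fin d) (Fin d) ℝ).mulVec x.ofLp)) = x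
    rw [Matrix.mulVec_mulVec, hinv, Matrix.one_mulVec]
  isometry_toFun := by
    apply Isometry.of_dist_eq
    intro x y
    have hsub : rotMap (u : Matrix (Fin d) (Fin d) ℝ) x - rotMap (u : Matrix (Fin d) (Fin d) ℝ) y
        = rotMap (u : Matrix (Fin d) (Fin d) ℝ) (x - y) := by
      unfold rotMap
      change WithLp.toLp 2 ((u : Matrix (Fin d) (Fin d) ℝ).mulVec x.ofLp) -
        WithLp.toLp 2 ((u : Matrix (Fin d) (Fin d) ℝ).mulVec y.ofLp) =
        WithLp.toLp 2 ((u : Matrix (Fin d) (Fin d) ℝ).mulVec (x.ofLp - y.ofLp))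
      rw [Matrix.mulVec_sub, WithLp.toLp_sub]
    rw [dist_eq_norm, dist_eq_norm, hsub, rotMap_norm_eq _ u.2]

lemma rotMap_measurePreserving (u : Matrix.orthogonalGroup (Fin d) ℝ) :
    MeasurePreserving (rotMap (u : Matrix (Fin d) (Fin d) ℝ)) (sphMeasure d) (sphMeasure d) := by
  have h := (rotIso u).measurePreserving_hausdorffMeasure ((d : ℝ) - 1)
  have hpre : (rotIso u) ⁻¹' (Metric.sphere (0 : EuclideanSpace ℝ (Fin d)) 1) =
      Metric.sphere 0 1 := by
    ext x
    simp only [Set.mem_preimage, Metric.mem_sphere, dist_zero_right]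
    have : ‖rotIso u x‖ = ‖x‖ := rotMap_norm_eq _ u.2 x
    rw [this]
  have h2 := h.restrict_preimage (s := Metric.sphere 0 1) Metric.isClosed_sphere.measurableSet
  rw [hpre] at h2
  exact h2

end aux

/-- If some single element `γ ∈ SO(d)` occurs strictly more than `r/2` times among the
entries of an `r`-tuple `(γ_1, …, γ_r) ∈ SO(d)^r`, then the tuple does not fractionally
divide `S^{d-1}`. -/
theorem not_fracDivides_of_majority (d r : ℕ) (hd : 2 ≤ d) (hr : 2 ≤ r)
    (γs : Fin r → SO d)
    (h : ∃ γ : SO d, r < 2 * Nat.card {s : Fin r // γs s = γ}) :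
    ¬ FracDivides γs := by
  classical
  rintro ⟨f, hf2, hsum, hnc⟩
  obtain ⟨γ, hγ⟩ := h
  by_cases hμ0 : sphMeasure d = 0
  · refine hnc ⟨0, ?_⟩
    rw [hμ0]
    simp [Filter.EventuallyEq]
  -- the measure-preserving maps
  have hT : ∀ s : Fin r, MeasurePreserving (rotMap (SO.mat (γs s)⁻¹))
      (sphMeasure d) (sphMeasure d) :=
    fun s => rotMap_measurePreserving (((γs s)⁻¹ : SO d) : Matrix.orthogonalGroup (Fin d) ℝ)
  have hTγ : MeasurePreserving (rotMap (SO.mat γ⁻¹)) (sphMeasure d) (sphMeasure d) :=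
    rotMap_measurePreserving ((γ⁻¹ : SO d) : Matrix.orthogonalGroup (Fin d) ℝ)
  have hfm : AEStronglyMeasurable f (sphMeasure d) := hf2.aestronglyMeasurable
  have hcomp : ∀ s : Fin r, AEStronglyMeasurable
      (fun x => f (rotMap (SO.mat (γs s)⁻¹) x)) (sphMeasure d) :=
    fun s => hfm.comp_measurePreserving (hT s)
  -- the sum hypothesis, rewritten
  have hsum' : (fun x => ∑ s, f (rotMap (SO.mat (γs s)⁻¹) x)) =ᵐ[sphMeasure d]
      (fun _ => (1 : ℝ)) := hsum
  -- finiteness of the measure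
  have hone : eLpNorm (fun _ : EuclideanSpace ℝ (Fin d) => (1 : ℝ)) 2 (sphMeasure d) < ⊤ := by
    rw [← eLpNorm_congr_ae hsum']
    have hfn : (fun x => ∑ s, f (rotMap (SO.mat (γs s)⁻¹) x))
        = ∑ s : Fin r, (fun x => f (rotMap (SO.mat (γs s)⁻¹) x)) := by
      funext x; rw [Finset.sum_apply]
    calc eLpNorm (fun x => ∑ s, f (rotMap (SO.mat (γs s)⁻¹) x)) 2 (sphMeasure d)
        = eLpNorm (∑ s : Fin r, (fun x => f (rotMap (SO.mat (γs s)⁻¹) x))) 2 (sphMeasure d) := by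
          rw [hfn]
      _ ≤ ∑ s, eLpNorm (fun x => f (rotMap (SO.mat (γs s)⁻¹) x)) 2 (sphMeasure d) :=
          eLpNorm_sum_le (fun s _ => hcomp s) one_le_two
      _ = ∑ _s : Fin r, eLpNorm f 2 (sphMeasure d) := by
          refine Finset.sum_congr rfl fun s _ => ?_
          exact eLpNorm_comp_measurePreserving hfm (hT s)
      _ = (r : ℝ≥0∞) * eLpNorm f 2 (sphMeasure d) := by
          rw [Finset.sum_const, Finset.card_univ, Fintype.card_fin, nsmul_eq_mul]
      _ < ⊤ := ENNReal.mul_lt_top (by simp) hf2.2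
  have hμfin : sphMeasure d Set.univ < ⊤ := by
    rw [eLpNorm_const (1 : ℝ) two_ne_zero hμ0] at hone
    simp only [enorm_one, one_mul] at hone
    have h2 : (0 : ℝ) < 1 / (2 : ℝ≥0∞).toReal := by norm_num
    exact (ENNReal.rpow_lt_top_iff_of_pos h2).mp hone
  haveI : IsFiniteMeasure (sphMeasure d) := ⟨hμfin⟩
  -- the centered function g
  set g : EuclideanSpace ℝ (Fin d) → ℝ := fun x => f x - (r : ℝ)⁻¹ with hgdef
  have hg2 : MemLp g 2 (sphMeasure d) := hf2.sub (memLp_const _)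
  have hgm : AEStronglyMeasurable g (sphMeasure d) := hg2.aestronglyMeasurable
  have hgcomp : ∀ s : Fin r, AEStronglyMeasurable
      (fun x => g (rotMap (SO.mat (γs s)⁻¹) x)) (sphMeasure d) :=
    fun s => hgm.comp_measurePreserving (hT s)
  have hrne : (r : ℝ) ≠ 0 := by positivity
  have hgsum : (fun x => ∑ s, g (rotMap (SO.mat (γs s)⁻¹) x)) =ᵐ[sphMeasure d]
      (fun _ => (0 : ℝ)) := by
    filter_upwards [hsum'] with x hx
    show ∑ s, (f (rotMap (SO.mat (γs s)⁻¹) x) - (r : ℝ)⁻¹) = 0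
    rw [Finset.sum_sub_distrib, hx, Finset.sum_const, Finset.card_univ, Fintype.card_fin,
      nsmul_eq_mul, mul_inv_cancel₀ hrne, sub_self]
  -- g is not a.e. zero
  have hgne : eLpNorm g 2 (sphMeasure d) ≠ 0 := by
    intro h0
    have hg0 : g =ᵐ[sphMeasure d] 0 := (eLpNorm_eq_zero_iff hgm two_ne_zero).mp h0
    refine hnc ⟨(r : ℝ)⁻¹, ?_⟩
    filter_upwards [hg0] with x hx
    have : f x - (r : ℝ)⁻¹ = 0 := hx
    linarith
  clear_value g
  -- splitting the sum
  set E : Finset (Fin r) := Finset.univ.filter (fun s => γs s = γ) with hEdef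
  set E' : Finset (Fin r) := Finset.univ.filter (fun s => ¬ γs s = γ) with hE'def
  set k : ℕ := E.card with hkdef
  have hkcard : Nat.card {s : Fin r // γs s = γ} = k := by
    rw [Nat.card_eq_fintype_card, Fintype.card_subtype]
  rw [hkcard] at hγ
  have hcards : k + E'.card = r := by
    rw [hkdef, hE'def, hEdef, Finset.card_filter_add_card_filter_not,
      Finset.card_univ, Fintype.card_fin]
  have hsplit : ∀ x, ∑ s, g (rotMap (SO.mat (γs s)⁻¹) x) =
      (k : ℝ) * g (rotMap (SO.mat γ⁻¹) x) + ∑ s ∈ E', g (rotMap (SO.mat (γs s)⁻¹) x) := by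
    intro x
    rw [← Finset.sum_filter_add_sum_filter_not Finset.univ (fun s => γs s = γ)
      (fun s => g (rotMap (SO.mat (γs s)⁻¹) x))]
    congr 1
    rw [Finset.sum_congr rfl (fun s hs => ?_), Finset.sum_const, nsmul_eq_mul]
    have hsγ : γs s = γ := (Finset.mem_filter.mp hs).2
    rw [hsγ]
  have hmain : (fun x => (k : ℝ) * g (rotMap (SO.mat γ⁻¹) x)) =ᵐ[sphMeasure d]
      (fun x => -∑ s ∈ E', g (rotMap (SO.mat (γs s)⁻¹) x)) := by
    filter_upwards [hgsum] with x hx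
    rw [hsplit x] at hx
    linarith [hx]
  -- norm computation
  have hNlt : eLpNorm g 2 (sphMeasure d) ≠ ⊤ := hg2.2.ne
  have hLHS : eLpNorm (fun x => (k : ℝ) * g (rotMap (SO.mat γ⁻¹) x)) 2 (sphMeasure d)
      = (k : ℝ≥0∞) * eLpNorm g 2 (sphMeasure d) := by
    have h1 : eLpNorm ((k : ℝ) • (fun x => g (rotMap (SO.mat γ⁻¹) x))) 2 (sphMeasure d)
        = ‖(k : ℝ)‖₊ • eLpNorm (fun x => g (rotMap (SO.mat γ⁻¹) x)) 2 (sphMeasure d) :=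
      eLpNorm_const_smul _ _ _ _
    have h2 : eLpNorm (fun x => g (rotMap (SO.mat γ⁻¹) x)) 2 (sphMeasure d) = eLpNorm g 2 (sphMeasure d) :=
      eLpNorm_comp_measurePreserving hgm hTγ
    rw [h2] at h1
    have h3 : ((k : ℝ) • (fun x => g (rotMap (SO.mat γ⁻¹) x)) : _ → ℝ)
        = fun x => (k : ℝ) * g (rotMap (SO.mat γ⁻¹) x) := rfl
    rw [h3] at h1
    rw [h1]
    simp [ENNReal.smul_def]
  have hRHS : eLpNorm (fun x => -∑ s ∈ E', g (rotMap (SO.mat (γs s)⁻¹) x)) 2 (sphMeasure d)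
      ≤ (E'.card : ℝ≥0∞) * eLpNorm g 2 (sphMeasure d) := by
    have hneg : eLpNorm (fun x => -∑ s ∈ E', g (rotMap (SO.mat (γs s)⁻¹) x)) 2 (sphMeasure d)
        = eLpNorm (fun x => ∑ s ∈ E', g (rotMap (SO.mat (γs s)⁻¹) x)) 2 (sphMeasure d) :=
      eLpNorm_neg _ _ _
    rw [hneg]
    have hfn' : (fun x => ∑ s ∈ E', g (rotMap (SO.mat (γs s)⁻¹) x))
        = ∑ s ∈ E', (fun x => g (rotMap (SO.mat (γs s)⁻¹) x)) := by
      funext x; rw [Finset.sum_apply]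
    calc eLpNorm (fun x => ∑ s ∈ E', g (rotMap (SO.mat (γs s)⁻¹) x)) 2 (sphMeasure d)
        = eLpNorm (∑ s ∈ E', (fun x => g (rotMap (SO.mat (γs s)⁻¹) x))) 2 (sphMeasure d) := by
          rw [hfn']
      _ ≤ ∑ s ∈ E', eLpNorm (fun x => g (rotMap (SO.mat (γs s)⁻¹) x)) 2 (sphMeasure d) :=
          eLpNorm_sum_le (fun s _ => hgcomp s) one_le_two
      _ = ∑ _s ∈ E', eLpNorm g 2 (sphMeasure d) := Finset.sum_congr rfl fun s _ =>
          eLpNorm_comp_measurePreserving hgm (hT s)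
      _ = (E'.card : ℝ≥0∞) * eLpNorm g 2 (sphMeasure d) := by rw [Finset.sum_const, nsmul_eq_mul]
  have hineq : (k : ℝ≥0∞) * eLpNorm g 2 (sphMeasure d) ≤ (E'.card : ℝ≥0∞) * eLpNorm g 2 (sphMeasure d) := by
    rw [← hLHS]
    rw [eLpNorm_congr_ae hmain]
    exact hRHS
  have hkle : (k : ℝ≥0∞) ≤ (E'.card : ℝ≥0∞) :=
    (ENNReal.mul_le_mul_iff_left hgne hNlt).mp hineq
  have hkle' : k ≤ E'.card := by exact_mod_cast hkle
  omega
end
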